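/- Let K = (G, M, I) be a formal context with G and M finite such that I ≠ G × M (there is at least one non-incident object/attribute pair). Then there exist g ∈ G and m ∈ M with (g,m) ∉ I such that 2 · (number of concepts of K_{-g-m}) ≥ (number of concepts of K); i.e., the subcontext K_{-g-m} is rich. -/

import Mathlib

/-- Derivation of a set of objects: the attributes shared by all of them. -/
def intentOf {G M : Type*} (I : G → M → Prop) (S : Set G) : Set M :=
  {n | ∀ g ∈ S, I g n}

/-- Derivation of a set of attributes: the objects having all of them. -/
def extentOf {G M : Type*} (I : G → M → Prop) (B : Set M) : Set G :=
  {g | ∀ n ∈ B, I g n}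

/-- Double derivation (closure) of a set of objects. -/
def cl {G M : Type*} (I : G → M → Prop) (S : Set G) : Set G :=
  extentOf I (intentOf I S)

/-- A set of objects is an extent if it is closed under double derivation. -/
def IsExtent {G M : Type*} (I : G → M → Prop) (S : Set G) : Prop :=
  cl I S = S

/-- The number of concepts of the context equals its number of extents. -/
noncomputable def numConcepts {G M : Type*} (I : G → M → Prop) : ℕ :=
  {S : Set G | IsExtent I S}.ncard

/-- The context op^{g,m}(K): fill the row of `g` except at `m`,
and fill the column of `m` except at `g`. -/
def opRel {G M : Type*} (I : G → M → Prop) (g : G) (m : M) : G → M → Prop :=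
  fun h n => I h n ∨ (h = g ∧ n ≠ m) ∨ (h ≠ g ∧ n = m)

/-- `S` is an `R`-mixed generator. -/
def MixGen {G M : Type*} (I : G → M → Prop) (R S : Set G) : Prop :=
  ∀ g : G, (g ∈ S ∩ R → cl I (S \ {g}) ≠ cl I S) ∧
    (g ∉ S ∪ R → cl I (S ∪ {g}) ≠ cl I S)

/-- `S` strongly avoids `h` (with respect to the attribute `m`):
`S' ∩ (hᶜ \ {m}) ≠ ∅`. -/
def StronglyAvoids {G M : Type*} (I : G → M → Prop) (m : M) (S : Set G) (h : G) : Prop :=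
  ∃ n, n ∈ intentOf I S ∧ ¬ I h n ∧ n ≠ m

/-- `χ(S)`: the set of objects of `R = G \ m'` strongly avoided by `S`. -/
def chi {G M : Type*} (I : G → M → Prop) (m : M) (S : Set G) : Set G :=
  {h | ¬ I h m ∧ StronglyAvoids I m S h}

section Aux
variable {G M : Type*} (I : G → M → Prop) (m : M)

/-- closure of the context with attribute `m` deleted -/
def cmOp (S : Set G) : Set G := {h | ∀ n, n ≠ m → (∀ x ∈ S, I x n) → I h n}

/-- extents of the context with attribute `m` deleted -/
def LmSet : Set (Set G) := {S | cmOp I m S = S}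

/-- traces on `G \ {g}` of extents of the context with `m` deleted -/
def LgSet (g : G) : Set (Set G) := {B | cmOp I m B \ {g} = B}

/-- `F` is `g`-lonely -/
def LonP (g : G) (F : Set G) : Prop :=
  (g ∈ F ∧ F \ {g} ∉ LmSet I m) ∨ (g ∉ F ∧ F ∪ {g} ∉ LmSet I m)

def A0Set : Set (Set G) := {S | IsExtent I S ∧ S ∉ LmSet I m}

variable {I m}

lemma mem_cl {S : Set G} {h : G} : h ∈ cl I S ↔ ∀ n, (∀ x ∈ S, I x n) → I h n :=
  Iff.rfl

lemma subset_cm {S : Set G} : S ⊆ cmOp I m S := fun x hx n _ hn => hn x hx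

lemma cm_mono {S T : Set G} (h : S ⊆ T) : cmOp I m S ⊆ cmOp I m T :=
  fun x hx n hnm hn => hx n hnm (fun y hy => hn y (h hy))

lemma cm_idem (S : Set G) : cmOp I m (cmOp I m S) = cmOp I m S := by
  apply Set.Subset.antisymm
  · intro h hh n hnm hn
    exact hh n hnm (fun x hx => hx n hnm hn)
  · exact subset_cm

lemma cm_mem_LmSet (S : Set G) : cmOp I m S ∈ LmSet I m := cm_idem S

lemma cm_min {E F : Set G} (hF : F ∈ LmSet I m) (hEF : E ⊆ F) : cmOp I m E ⊆ F :=
  hF ▸ cm_mono hEF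

lemma LmSet_extent {S : Set G} (hS : S ∈ LmSet I m) : IsExtent I S := by
  unfold IsExtent
  apply Set.Subset.antisymm
  · intro h hh
    rw [← hS]
    intro n hnm hn
    exact mem_cl.mp hh n hn
  · intro h hh
    exact fun n hn => hn h hh

lemma A0_subset_P {E : Set G} (hE : E ∈ A0Set I m) : ∀ x ∈ E, I x m := by
  by_contra hc
  push_neg at hc
  obtain ⟨x₀, hx₀E, hx₀⟩ := hc
  apply hE.2
  apply Set.Subset.antisymm
  · intro h hh
    have hcl : h ∈ cl I E := by
      rw [mem_cl]
      intro n hn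
      by_cases hnm : n = m
      · exact absurd (hnm ▸ hn x₀ hx₀E) hx₀
      · exact hh n hnm hn
    rw [hE.1] at hcl
    exact hcl
  · exact subset_cm

lemma A0_trace {E : Set G} (hE : E ∈ A0Set I m) :
    ∀ h ∈ cmOp I m E, I h m → h ∈ E := by
  intro h hh hhm
  have hcl : h ∈ cl I E := by
    rw [mem_cl]
    intro n hn
    by_cases hnm : n = m
    · exact hnm ▸ hhm
    · exact hh n hnm hn
  rw [hE.1] at hcl
  exact hcl

lemma A0_wit {E : Set G} (hE : E ∈ A0Set I m) :
    ∃ w, w ∈ cmOp I m E ∧ ¬ I w m := by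
  have hne : cmOp I m E ≠ E := fun h => hE.2 h
  have hex : ∃ w, w ∈ cmOp I m E ∧ w ∉ E := by
    by_contra hc
    push_neg at hc
    exact hne (Set.Subset.antisymm hc subset_cm)
  obtain ⟨w, hw, hwE⟩ := hex
  exact ⟨w, hw, fun hwm => hwE (A0_trace hE w hw hwm)⟩

lemma LmSet_diff_mem_Lg {F : Set G} (hF : F ∈ LmSet I m) (g : G) :
    F \ {g} ∈ LgSet I m g := by
  have h1 : cmOp I m (F \ {g}) ⊆ F := cm_min hF Set.diff_subset
  apply Set.Subset.antisymm
  · intro x hx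
    exact ⟨h1 hx.1, hx.2⟩
  · intro x hx
    exact ⟨subset_cm hx, hx.2⟩


lemma cl_sub_eq (g : G) (A : Set {h : G // h ≠ g}) :
    cl (fun (h : {h : G // h ≠ g}) (n : {n : M // n ≠ m}) => I h.1 n.1) A
      = Subtype.val ⁻¹' (cmOp I m (Subtype.val '' A)) := by
  ext h
  rw [mem_cl]
  constructor
  · intro H n hnm hy
    exact H ⟨n, hnm⟩ (fun x hx => hy x.1 ⟨x, hx, rfl⟩)
  · intro H n hA
    exact H n.1 n.2 (fun y hy => by obtain ⟨x, hx, rfl⟩ := hy; exact hA x hx)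

lemma range_val_ne (g : G) :
    Set.range (Subtype.val : {h : G // h ≠ g} → G) = {h : G | h ≠ g} :=
  Subtype.range_coe_subtype

lemma extent_sub_iff (g : G) (A : Set {h : G // h ≠ g}) :
    IsExtent (fun (h : {h : G // h ≠ g}) (n : {n : M // n ≠ m}) => I h.1 n.1) A
      ↔ Subtype.val '' A ∈ LgSet I m g := by
  unfold IsExtent
  rw [cl_sub_eq]
  constructor
  · intro hA
    have himg := congrArg (Set.image (Subtype.val : {h : G // h ≠ g} → G)) hA
    rw [Set.image_preimage_eq_inter_range, range_val_ne] at himg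
    have : cmOp I m (Subtype.val '' A) ∩ {h : G | h ≠ g}
        = cmOp I m (Subtype.val '' A) \ {g} := by
      ext x; simp [Set.mem_diff]
    rw [this] at himg
    exact himg
  · intro hB
    have hg : (Subtype.val ⁻¹' ({g} : Set G) : Set {h : G // h ≠ g}) = ∅ := by
      ext x; simp [x.2]
    have : (Subtype.val ⁻¹' (cmOp I m (Subtype.val '' A)) : Set {h : G // h ≠ g})
        = Subtype.val ⁻¹' (cmOp I m (Subtype.val '' A) \ {g}) := by
      rw [Set.preimage_diff, hg, Set.diff_empty]
    rw [this, hB, Set.preimage_image_eq A Subtype.val_injective]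

lemma numConcepts_sub_eq (g : G) :
    numConcepts (fun (h : {h : G // h ≠ g}) (n : {n : M // n ≠ m}) => I h.1 n.1)
      = (LgSet I m g).ncard := by
  unfold numConcepts
  have hinj : Function.Injective (Set.image (Subtype.val : {h : G // h ≠ g} → G)) :=
    Set.image_injective.mpr Subtype.val_injective
  rw [← Set.ncard_image_of_injective _ hinj]
  congr 1
  ext B
  constructor
  · rintro ⟨A, hA, rfl⟩
    exact (extent_sub_iff g A).mp hA
  · intro hB
    refine ⟨Subtype.val ⁻¹' B, ?_, ?_⟩
    · rw [Set.mem_setOf_eq, extent_sub_iff]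
      have hgB : g ∉ B := fun hgB => by
        rw [← hB] at hgB; exact hgB.2 rfl
      have : Subtype.val '' (Subtype.val ⁻¹' B : Set {h : G // h ≠ g}) = B := by
        rw [Set.image_preimage_eq_inter_range, range_val_ne]
        ext x
        simp only [Set.mem_inter_iff, Set.mem_setOf_eq]
        exact ⟨fun h => h.1, fun h => ⟨h, fun he => hgB (he ▸ h)⟩⟩
      rw [this]; exact hB
    · have hgB : g ∉ B := fun hgB => by
        rw [← hB] at hgB; exact hgB.2 rfl
      rw [Set.image_preimage_eq_inter_range, range_val_ne]
      ext x
      simp only [Set.mem_inter_iff, Set.mem_setOf_eq]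
      exact ⟨fun h => h.1, fun h => ⟨h, fun he => hgB (he ▸ h)⟩⟩


lemma eq_of_diff_singleton {A B : Set G} {g : G} (h : A \ {g} = B \ {g})
    (hA : g ∈ A) (hB : g ∈ B) : A = B := by
  ext x
  by_cases hx : x = g
  · subst hx; simp [hA, hB]
  · constructor
    · intro hxA
      have : x ∈ B \ {g} := h ▸ ⟨hxA, hx⟩
      exact this.1
    · intro hxB
      have : x ∈ A \ {g} := h.symm ▸ ⟨hxB, hx⟩
      exact this.1

lemma count_key [Finite G] (g : G) :
    (LmSet I m).ncard + {F | F ∈ LmSet I m ∧ LonP I m g F}.ncard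
      ≤ 2 * (LgSet I m g).ncard := by
  classical
  set Lon' : Set (Set G) := {F | F ∈ LmSet I m ∧ LonP I m g F} with hLon'
  have hinjT : Function.Injective (fun F : Set G => (F, true)) :=
    fun a b h => congrArg Prod.fst h
  have hinjF : Function.Injective (fun F : Set G => (F, false)) :=
    fun a b h => congrArg Prod.fst h
  set U : Set (Set G × Bool) :=
    (fun F => (F, true)) '' (LmSet I m) ∪ (fun F => (F, false)) '' Lon' with hU
  set T : Set (Set G × Bool) :=
    (fun F => (F, true)) '' (LgSet I m g) ∪ (fun F => (F, false)) '' (LgSet I m g) with hT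
  have hdisj : ∀ (s t : Set (Set G)),
      Disjoint ((fun F => (F, true)) '' s) ((fun F => (F, false)) '' t) := by
    intro s t
    rw [Set.disjoint_left]
    rintro p ⟨F, hF, rfl⟩ ⟨F', hF', hp⟩
    exact Bool.noConfusion (congrArg Prod.snd hp)
  have hUcard : U.ncard = (LmSet I m).ncard + Lon'.ncard := by
    rw [hU, Set.ncard_union_eq (hdisj _ _) (Set.toFinite _) (Set.toFinite _),
      Set.ncard_image_of_injective _ hinjT, Set.ncard_image_of_injective _ hinjF]
  have hTcard : T.ncard = 2 * (LgSet I m g).ncard := by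
    rw [hT, Set.ncard_union_eq (hdisj _ _) (Set.toFinite _) (Set.toFinite _),
      Set.ncard_image_of_injective _ hinjT, Set.ncard_image_of_injective _ hinjF]
    ring
  have hmain : U.ncard ≤ T.ncard := by
    apply Set.ncard_le_ncard_of_injOn
      (fun p => (p.1 \ {g}, if g ∈ p.1 then p.2 else !p.2))
    · intro p hp
      have hp1 : p.1 ∈ LmSet I m := by
        rcases hp with ⟨F, hF, rfl⟩ | ⟨F, hF, rfl⟩
        · exact hF
        · exact hF.1
      have hLg : p.1 \ {g} ∈ LgSet I m g := LmSet_diff_mem_Lg hp1 g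
      rw [hT]
      cases hb : (if g ∈ p.1 then p.2 else !p.2) with
      | true => exact Or.inl ⟨p.1 \ {g}, hLg, by simp [hb]⟩
      | false => exact Or.inr ⟨p.1 \ {g}, hLg, by simp [hb]⟩
    · intro p hp q hq heq
      have h1 : p.1 \ {g} = q.1 \ {g} := congrArg Prod.fst heq
      have h2 : (if g ∈ p.1 then p.2 else !p.2) = (if g ∈ q.1 then q.2 else !q.2) :=
        congrArg Prod.snd heq
      have hpm : (p.2 = true ∧ p.1 ∈ LmSet I m) ∨ (p.2 = false ∧ p.1 ∈ Lon') := by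
        rcases hp with ⟨F, hF, rfl⟩ | ⟨F, hF, rfl⟩
        · exact Or.inl ⟨rfl, hF⟩
        · exact Or.inr ⟨rfl, hF⟩
      have hqm : (q.2 = true ∧ q.1 ∈ LmSet I m) ∨ (q.2 = false ∧ q.1 ∈ Lon') := by
        rcases hq with ⟨F, hF, rfl⟩ | ⟨F, hF, rfl⟩
        · exact Or.inl ⟨rfl, hF⟩
        · exact Or.inr ⟨rfl, hF⟩
      by_cases hgp : g ∈ p.1 <;> by_cases hgq : g ∈ q.1
      · rw [if_pos hgp] at h2
        rw [if_pos hgq] at h2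
        exact Prod.ext (eq_of_diff_singleton h1 hgp hgq) h2
      · -- g ∈ p.1, g ∉ q.1 : contradiction
        exfalso
        rw [if_pos hgp] at h2
        rw [if_neg hgq] at h2
        have hq1 : q.1 = p.1 \ {g} := by
          rw [h1, Set.diff_singleton_eq_self hgq]
        have hp1q : p.1 = q.1 ∪ {g} := by
          apply Set.Subset.antisymm
          · intro x hx
            by_cases hxg : x = g
            · exact Or.inr hxg
            · exact Or.inl (hq1 ▸ ⟨hx, hxg⟩)
          · rintro x (hx | hx)
            · exact (hq1 ▸ hx).1
            · exact hx ▸ hgp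
        rcases hpm with ⟨hp2, hpLm⟩ | ⟨hp2, hpLon⟩
        · -- p.2 = true so q.2 = false, q.1 ∈ Lon'
          rw [hp2] at h2
          rcases hqm with ⟨hq2, _⟩ | ⟨hq2, hqLon⟩
          · rw [hq2] at h2; exact Bool.noConfusion h2
          · rcases hqLon.2 with ⟨hgq', _⟩ | ⟨_, hnotin⟩
            · exact hgq hgq'
            · exact hnotin (hp1q ▸ hpLm)
        · -- p.2 = false, p.1 ∈ Lon', q.2 = true
          rw [hp2] at h2
          rcases hqm with ⟨hq2, hqLm⟩ | ⟨hq2, _⟩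
          · rcases hpLon.2 with ⟨_, hnotin⟩ | ⟨hgp', _⟩
            · exact hnotin (hq1 ▸ hqLm)
            · exact hgp' hgp
          · rw [hq2] at h2; exact Bool.noConfusion h2
      · -- g ∉ p.1, g ∈ q.1 : symmetric contradiction
        exfalso
        rw [if_neg hgp] at h2
        rw [if_pos hgq] at h2
        have hp1 : p.1 = q.1 \ {g} := by
          rw [← h1, Set.diff_singleton_eq_self hgp]
        have hq1p : q.1 = p.1 ∪ {g} := by
          apply Set.Subset.antisymm
          · intro x hx
            by_cases hxg : x = g
            · exact Or.inr hxg
            · exact Or.inl (hp1 ▸ ⟨hx, hxg⟩)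
          · rintro x (hx | hx)
            · exact (hp1 ▸ hx).1
            · exact hx ▸ hgq
        rcases hqm with ⟨hq2, hqLm⟩ | ⟨hq2, hqLon⟩
        · rw [hq2] at h2
          rcases hpm with ⟨hp2, _⟩ | ⟨hp2, hpLon⟩
          · rw [hp2] at h2; exact Bool.noConfusion h2
          · rcases hpLon.2 with ⟨hgp', _⟩ | ⟨_, hnotin⟩
            · exact hgp hgp'
            · exact hnotin (hq1p ▸ hqLm)
        · rw [hq2] at h2
          rcases hpm with ⟨hp2, hpLm⟩ | ⟨hp2, _⟩
          · rcases hqLon.2 with ⟨_, hnotin⟩ | ⟨hgq', _⟩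
            · exact hnotin (hp1 ▸ hpLm)
            · exact hgq' hgq
          · rw [hp2] at h2; exact Bool.noConfusion h2
      · rw [if_neg hgp] at h2
        rw [if_neg hgq] at h2
        have hb : p.2 = q.2 := by
          cases hp2 : p.2 <;> cases hq2 : q.2 <;> rw [hp2, hq2] at h2 <;> simp_all
        have : p.1 = q.1 := by
          rw [← Set.diff_singleton_eq_self hgp, ← Set.diff_singleton_eq_self hgq, h1]
        exact Prod.ext this hb
  omega


lemma exists_good_g [Finite G] (hR : ∃ g₀ : G, ¬ I g₀ m) :
    ∃ g : G, ¬ I g m ∧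
      (A0Set I m).ncard ≤ {F | F ∈ LmSet I m ∧ LonP I m g F}.ncard := by
  classical
  by_contra hcon
  push_neg at hcon
  obtain ⟨g₀, hg₀⟩ := hR
  set a := (A0Set I m).ncard with ha
  have ha1 : 1 ≤ a := lt_of_le_of_lt (Nat.zero_le _) (hcon g₀ hg₀)
  set RF : Finset G := (Set.toFinite {g : G | ¬ I g m}).toFinset with hRF
  set A0F : Finset (Set G) := (Set.toFinite (A0Set I m)).toFinset with hA0F
  set pairsF : Finset (Set G × G) :=
    (Set.toFinite {p : Set G × G |
      ¬ I p.2 m ∧ p.1 ∈ LmSet I m ∧ LonP I m p.2 p.1}).toFinset with hpairsF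
  have memRF : ∀ g : G, g ∈ RF ↔ ¬ I g m := by
    intro g; rw [hRF, Set.Finite.mem_toFinset]; rfl
  have memA0F : ∀ S : Set G, S ∈ A0F ↔ S ∈ A0Set I m := by
    intro S; rw [hA0F, Set.Finite.mem_toFinset]
  have mempairs : ∀ p : Set G × G,
      p ∈ pairsF ↔ ¬ I p.2 m ∧ p.1 ∈ LmSet I m ∧ LonP I m p.2 p.1 := by
    intro p; rw [hpairsF, Set.Finite.mem_toFinset]; rfl
  set wit : Set G → G := fun E =>
    if h : ∃ w, w ∈ cmOp I m E ∧ ¬ I w m then h.choose else g₀ with hwitdef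
  have hwit : ∀ E : Set G, E ∈ A0Set I m →
      wit E ∈ cmOp I m E ∧ ¬ I (wit E) m := by
    intro E hE
    have hex := A0_wit hE
    rw [hwitdef]
    simp only [dif_pos hex]
    exact hex.choose_spec
  set ψ : Set G × G → Set G × G := fun p =>
    if p.2 ∉ cmOp I m p.1 ∧ (cmOp I m p.1 ∪ {p.2}) ∈ LmSet I m then
      (cmOp I m p.1 ∪ {p.2}, wit p.1)
    else (cmOp I m p.1, p.2) with hψ
  have hfacts : ∀ E : Set G, ∀ g : G, (E, g) ∈ A0F ×ˢ RF →
      (ψ (E, g) ∈ pairsF ∧ (ψ (E, g)).1 ∩ {x : G | I x m} = E ∧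
        (ψ (E, g) = (cmOp I m E, g) ∨
          (ψ (E, g) = (cmOp I m E ∪ {g}, wit E) ∧ g ∉ cmOp I m E))) := by
    intro E g hp
    rw [Finset.mem_product] at hp
    have hE : E ∈ A0Set I m := (memA0F E).mp hp.1
    have hg : ¬ I g m := (memRF g).mp hp.2
    have hF0 : cmOp I m E ∈ LmSet I m := cm_mem_LmSet E
    have hEP := A0_subset_P hE
    have htr := A0_trace hE
    have hEF0 : E ⊆ cmOp I m E := subset_cm
    have hgE : g ∉ E := fun h => hg (hEP g h)
    have htrace0 : cmOp I m E ∩ {x : G | I x m} = E := by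
      apply Set.Subset.antisymm
      · rintro x ⟨hx1, hx2⟩; exact htr x hx1 hx2
      · intro x hx; exact ⟨hEF0 hx, hEP x hx⟩
    by_cases hbad : g ∉ cmOp I m E ∧ (cmOp I m E ∪ {g}) ∈ LmSet I m
    · have hψp : ψ (E, g) = (cmOp I m E ∪ {g}, wit E) := by
        rw [hψ]; simp only [if_pos hbad]
      obtain ⟨hwF0, hwm⟩ := hwit E hE
      have hwE : wit E ∉ E := fun h => hwm (hEP _ h)
      refine ⟨?_, ?_, Or.inr ⟨hψp, hbad.1⟩⟩
      · rw [mempairs, hψp]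
        refine ⟨hwm, hbad.2, Or.inl ⟨Or.inl hwF0, ?_⟩⟩
        intro hmem
        have hsub : E ⊆ (cmOp I m E ∪ {g}) \ {wit E} := by
          intro x hx
          exact ⟨Or.inl (hEF0 hx), fun hxw => hwE (by rw [← hxw]; exact hx)⟩
        have := cm_min hmem hsub
        exact (this hwF0).2 rfl
      · rw [hψp]
        have heqtr : (cmOp I m E ∪ {g}) ∩ {x : G | I x m}
            = cmOp I m E ∩ {x : G | I x m} := by
          ext x
          simp only [Set.mem_inter_iff, Set.mem_union, Set.mem_singleton_iff,
            Set.mem_setOf_eq]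
          constructor
          · rintro ⟨hx1 | hx1, hx2⟩
            · exact ⟨hx1, hx2⟩
            · exact absurd hx2 (hx1 ▸ hg)
          · rintro ⟨hx1, hx2⟩; exact ⟨Or.inl hx1, hx2⟩
        rw [show (cmOp I m E ∪ {g}, wit E).1 = cmOp I m E ∪ {g} from rfl,
          heqtr, htrace0]
    · have hψp : ψ (E, g) = (cmOp I m E, g) := by
        rw [hψ]; simp only [if_neg hbad]
      refine ⟨?_, by rw [hψp]; exact htrace0, Or.inl hψp⟩
      rw [mempairs, hψp]
      refine ⟨hg, hF0, ?_⟩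
      by_cases hgF : g ∈ cmOp I m E
      · refine Or.inl ⟨hgF, ?_⟩
        intro hmem
        have hsub : E ⊆ cmOp I m E \ {g} := by
          intro x hx
          exact ⟨hEF0 hx, fun hxg => hgE (by rw [← hxg]; exact hx)⟩
        have := cm_min hmem hsub
        exact (this hgF).2 rfl
      · exact Or.inr ⟨hgF, fun hmem => hbad ⟨hgF, hmem⟩⟩
  have hinj : Set.InjOn ψ ↑(A0F ×ˢ RF) := by
    rintro ⟨E₁, g₁⟩ hp ⟨E₂, g₂⟩ hq heq
    have hp' := hfacts E₁ g₁ (by rwa [Finset.mem_coe] at hp)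
    have hq' := hfacts E₂ g₂ (by rwa [Finset.mem_coe] at hq)
    have hEeq : E₁ = E₂ := by rw [← hp'.2.1, ← hq'.2.1, heq]
    subst hEeq
    rcases hp'.2.2 with h1 | ⟨h1, hg1⟩ <;> rcases hq'.2.2 with h2 | ⟨h2, hg2⟩
    · rw [h1, h2] at heq
      rw [(Prod.mk.injEq _ _ _ _).mp heq |>.2]
    · exfalso
      rw [h1, h2] at heq
      have := (Prod.mk.injEq _ _ _ _).mp heq |>.1
      exact hg2 (this ▸ Set.mem_union_right _ (Set.mem_singleton g₂) :)
    · exfalso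
      rw [h1, h2] at heq
      have := (Prod.mk.injEq _ _ _ _).mp heq |>.1
      exact hg1 (this.symm ▸ Set.mem_union_right _ (Set.mem_singleton g₁) :)
    · rw [h1, h2] at heq
      have hfst := (Prod.mk.injEq _ _ _ _).mp heq |>.1
      have : g₁ ∈ cmOp I m E₁ ∪ {g₂} := hfst ▸ Set.mem_union_right _ (Set.mem_singleton g₁)
      rcases this with h | h
      · exact absurd h hg1
      · rw [h]
  have hcard1 : a * RF.card ≤ pairsF.card := by
    have := Finset.card_le_card_of_injOn ψ
      (fun p hp => by
        obtain ⟨E, g⟩ := p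
        exact (hfacts E g hp).1) hinj
    have hA0card : A0F.card = a := by
      rw [ha, Set.ncard_eq_toFinset_card _ (Set.toFinite _)]
    rwa [Finset.card_product, hA0card] at this
  have hcard2 : pairsF.card = ∑ g ∈ RF, (pairsF.filter (fun p => p.2 = g)).card := by
    apply Finset.card_eq_sum_card_fiberwise
    intro p hp
    rw [Finset.mem_coe, memRF]
    exact ((mempairs p).mp hp).1
  have hcard3 : ∀ g ∈ RF, (pairsF.filter (fun p => p.2 = g)).card ≤ a - 1 := by
    intro g hg
    have hXg : (pairsF.filter (fun p => p.2 = g)).card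
        ≤ {F | F ∈ LmSet I m ∧ LonP I m g F}.ncard := by
      rw [Set.ncard_eq_toFinset_card _ (Set.toFinite _)]
      apply Finset.card_le_card_of_injOn (fun p => p.1)
      · intro p hp
        rw [Finset.mem_coe, Finset.mem_filter] at hp
        rw [Finset.mem_coe, Set.Finite.mem_toFinset]
        have h1 := (mempairs p).mp hp.1
        exact ⟨h1.2.1, hp.2 ▸ h1.2.2⟩
      · intro p hp q hq h
        rw [Finset.mem_coe, Finset.mem_filter] at hp hq
        exact Prod.ext h (hp.2.trans hq.2.symm)
    have := hcon g ((memRF g).mp hg)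
    omega
  have hcard4 : pairsF.card ≤ RF.card * (a - 1) := by
    rw [hcard2]
    calc ∑ g ∈ RF, (pairsF.filter (fun p => p.2 = g)).card
        ≤ ∑ _g ∈ RF, (a - 1) := Finset.sum_le_sum hcard3
      _ = RF.card * (a - 1) := by rw [Finset.sum_const, smul_eq_mul]
  have hRFpos : 1 ≤ RF.card := by
    have : g₀ ∈ RF := (memRF g₀).mpr hg₀
    exact Finset.card_pos.mpr ⟨g₀, this⟩
  have hfin : RF.card * (a - 1) + RF.card = RF.card * a := by
    rw [← Nat.mul_succ]
    congr 1
    omega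
  have hcomm : RF.card * a = a * RF.card := Nat.mul_comm _ _
  omega

end Aux

theorem statement1 {G M : Type*} [Fintype G] [Fintype M] (I : G → M → Prop)
    (hI : {p : G × M | I p.1 p.2} ≠ Set.univ) :
    ∃ (g : G) (m : M), ¬ I g m ∧
      numConcepts I ≤
        2 * numConcepts (fun (h : {h : G // h ≠ g}) (n : {n : M // n ≠ m}) => I h.1 n.1) := by
  classical
  rw [Set.ne_univ_iff_exists_notMem] at hI
  obtain ⟨⟨gp, mp⟩, hp⟩ := hI
  have hp' : ¬ I gp mp := hp
  obtain ⟨g, hgm, hcount⟩ := exists_good_g (I := I) (m := mp) ⟨gp, hp'⟩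
  refine ⟨g, mp, hgm, ?_⟩
  have h1 : numConcepts I ≤ (LmSet I mp).ncard + (A0Set I mp).ncard := by
    unfold numConcepts
    have hsub : {S : Set G | IsExtent I S} ⊆ LmSet I mp ∪ A0Set I mp := by
      intro S hS
      by_cases h : S ∈ LmSet I mp
      · exact Or.inl h
      · exact Or.inr ⟨hS, h⟩
    calc {S : Set G | IsExtent I S}.ncard
        ≤ (LmSet I mp ∪ A0Set I mp).ncard := Set.ncard_le_ncard hsub (Set.toFinite _)
      _ ≤ _ := Set.ncard_union_le _ _
  have h2 := count_key (I := I) (m := mp) g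
  rw [numConcepts_sub_eq]
  omega
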